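/- For all real numbers a and b, Real.tanh ((1/2) * Real.log ((1 + Real.exp (a + b)) / (Real.exp a + Real.exp b))) = Real.tanh (a / 2) * Real.tanh (b / 2). -/
import Mathlib

open Real

lemma tanh_eq_exp (x : ℝ) :
    Real.tanh x = (Real.exp (2 * x) - 1) / (Real.exp (2 * x) + 1) := by
  have h : Real.exp x + Real.exp (-x) > 0 := by positivity
  rw [Real.tanh_eq_sinh_div_cosh, Real.sinh_eq, Real.cosh_eq]
  have hx : Real.exp (-x) > 0 := Real.exp_pos _
  rw [div_eq_div_iff (by positivity) (by positivity)]
  have h2 : Real.exp (2 * x) = Real.exp x * Real.exp x := by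
    rw [← Real.exp_add]; ring_nf
  have h3 : Real.exp (-x) * Real.exp x = 1 := by
    rw [← Real.exp_add]; simp
  nlinarith [h2, h3]

/-- The boxplus combination of two LLRs satisfies the tanh-product formula. -/
theorem tanh_half_boxplus (a b : ℝ) :
    Real.tanh ((1 / 2) * Real.log ((1 + Real.exp (a + b)) / (Real.exp a + Real.exp b)))
      = Real.tanh (a / 2) * Real.tanh (b / 2) := by
  have ha := Real.exp_pos a
  have hb := Real.exp_pos b
  have hab := Real.exp_pos (a + b)
  have hpos : (1 + Real.exp (a + b)) / (Real.exp a + Real.exp b) > 0 := by positivity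
  rw [tanh_eq_exp, tanh_eq_exp, tanh_eq_exp]
  have h1 : 2 * ((1 / 2) * Real.log ((1 + Real.exp (a + b)) / (Real.exp a + Real.exp b)))
      = Real.log ((1 + Real.exp (a + b)) / (Real.exp a + Real.exp b)) := by ring
  have h2 : 2 * (a / 2) = a := by ring
  have h3 : 2 * (b / 2) = b := by ring
  rw [h1, h2, h3, Real.exp_log hpos]
  have he : Real.exp (a + b) = Real.exp a * Real.exp b := Real.exp_add a b
  rw [he]
  have hd : Real.exp a + Real.exp b > 0 := by positivity
  field_simp
  ring
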